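/- Let X be a connected quandle, a ∈ X fixed, and let X̂ = Ker(ε : As(X) → ℤ) with quandle operation g◁h := e_a⁻¹ g h⁻¹ e_a h. Then the map p : X̂ → X, p(g) = a·g (action of As(X) on X), is a surjective quandle homomorphism and moreover a quandle covering: p(g) = p(h) implies k◁g = k◁h for all k ∈ X̂. -/

import Mathlib

/-- A quandle in the convention of the paper. -/
class PQuandle (X : Type*) where
  op : X → X → X
  op_self : ∀ a : X, op a a = a
  op_bij : ∀ a : X, Function.Bijective (fun x => op x a)
  op_distrib : ∀ a b c : X, op (op a b) c = op (op a c) (op b c)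

infixl:65 " ◁ " => PQuandle.op

namespace PQuandle

variable {X : Type*} [PQuandle X]

/-- The `n`-fold right operation `x ◁ⁿ y`. -/
def opn (x : X) (n : ℕ) (y : X) : X := (fun z => z ◁ y)^[n] x

/-- The right translation `(· ◁ y)` as a permutation of `X`. -/
noncomputable def act (y : X) : Equiv.Perm X := Equiv.ofBijective _ (op_bij y)

@[simp] lemma act_apply (y x : X) : act y x = x ◁ y := rfl

/-- The inner automorphism group `Inn(X)`. -/
noncomputable def Inn (X : Type*) [PQuandle X] : Subgroup (Equiv.Perm X) :=
  Subgroup.closure (Set.range (act (X := X)))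

/-- The relators `e_{x ◁ y}⁻¹ e_y⁻¹ e_x e_y` of the adjoint group. -/
def adjRels (X : Type*) [PQuandle X] : Set (FreeGroup X) :=
  { r | ∃ x y : X,
      r = (FreeGroup.of (x ◁ y))⁻¹ * (FreeGroup.of y)⁻¹ * FreeGroup.of x * FreeGroup.of y }

/-- The adjoint (enveloping) group `As(X)` of the quandle `X`. -/
def Adj (X : Type*) [PQuandle X] : Type _ := PresentedGroup (adjRels X)

instance : Group (Adj X) := by unfold Adj; infer_instance

/-- The generator `e_x` of `As(X)`. -/
def gen (x : X) : Adj X := PresentedGroup.of x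

lemma gen_rel (x y : X) : gen (x ◁ y) = (gen y)⁻¹ * gen x * gen y := by
  have h : ((FreeGroup.of (x ◁ y))⁻¹ * (FreeGroup.of y)⁻¹ * FreeGroup.of x * FreeGroup.of y :
      FreeGroup X) ∈ Subgroup.normalClosure (adjRels X) :=
    Subgroup.subset_normalClosure ⟨x, y, rfl⟩
  have h2 : ((gen (x ◁ y))⁻¹ * (gen y)⁻¹ * gen x * gen y : Adj X) = 1 := by
    have := (QuotientGroup.eq_one_iff
      (((FreeGroup.of (x ◁ y))⁻¹ * (FreeGroup.of y)⁻¹ * FreeGroup.of x * FreeGroup.of y :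
        FreeGroup X))).mpr h
    exact this
  calc gen (x ◁ y)
      = gen (x ◁ y) * ((gen (x ◁ y))⁻¹ * (gen y)⁻¹ * gen x * gen y) := by rw [h2, mul_one]
    _ = (gen y)⁻¹ * gen x * gen y := by group

lemma act_mul_act (x y : X) : act y * act x = act (x ◁ y) * act y := by
  ext z
  simp only [Equiv.Perm.mul_apply, act_apply]
  exact op_distrib z x y

/-- The homomorphism `As(X) → Perm(X)` sending `e_y` to the inverse of the right
translation by `y`; it encodes the right action of `As(X)` on `X`. -/
noncomputable def innHom : Adj X →* Equiv.Perm X :=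
  PresentedGroup.toGroup (f := fun y : X => (act y)⁻¹) (by
    rintro r ⟨x, y, rfl⟩
    simp only [map_mul, map_inv, FreeGroup.lift_apply_of, inv_inv]
    have := act_mul_act x y
    calc act (x ◁ y) * act y * (act x)⁻¹ * (act y)⁻¹
        = (act y * act x) * (act x)⁻¹ * (act y)⁻¹ := by rw [this]
      _ = 1 := by group)

@[simp] lemma innHom_gen (y : X) : innHom (gen y) = (act y)⁻¹ :=
  PresentedGroup.toGroup.of _

/-- The right action of `As(X)` on `X`: `x · g`. -/
noncomputable def ract (x : X) (g : Adj X) : X := (innHom g)⁻¹ x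

@[simp] lemma ract_gen (x y : X) : ract x (gen y) = x ◁ y := by
  simp [ract]

lemma ract_mul (x : X) (g h : Adj X) : ract x (g * h) = ract (ract x g) h := by
  simp [ract, map_mul]

/-- A quandle is connected if the right action of `As(X)` on `X` is transitive. -/
def Connected (X : Type*) [PQuandle X] : Prop :=
  ∀ x y : X, ∃ g : Adj X, ract x g = y

/-- The homomorphism `ε : As(X) → ℤ` sending every generator `e_x` to `1`. -/
def eps : Adj X →* Multiplicative ℤ :=
  PresentedGroup.toGroup (f := fun _ : X => Multiplicative.ofAdd 1) (by
    rintro r ⟨x, y, rfl⟩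
    simp only [map_mul, map_inv, FreeGroup.lift_apply_of]
    group)

@[simp] lemma eps_gen (x : X) : eps (gen x) = Multiplicative.ofAdd 1 :=
  PresentedGroup.toGroup.of _

/-- The underlying set of the universal covering quandle: `Ker ε`. -/
def covOp (a : X) (g h : (eps (X := X)).ker) : (eps (X := X)).ker :=
  ⟨(gen a)⁻¹ * g.1 * (h.1)⁻¹ * gen a * h.1, by
    have hg : eps g.1 = 1 := g.2
    have hh : eps h.1 = 1 := h.2
    simp only [MonoidHom.mem_ker, map_mul, map_inv, hg, hh]
    group⟩

/-- `n`-fold covering operation. -/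
def covOpn (a : X) (g : (eps (X := X)).ker) (n : ℕ) (h : (eps (X := X)).ker) :
    (eps (X := X)).ker := (fun u => covOp a u h)^[n] g

/-- The right translation of the covering quandle as a permutation. -/
def covAct (a : X) (h : (eps (X := X)).ker) : Equiv.Perm (eps (X := X)).ker where
  toFun g := covOp a g h
  invFun g := ⟨gen a * g.1 * (h.1)⁻¹ * (gen a)⁻¹ * h.1, by
    have hg : eps g.1 = 1 := g.2
    have hh : eps h.1 = 1 := h.2
    simp only [MonoidHom.mem_ker, map_mul, map_inv, hg, hh]
    group⟩
  left_inv g := by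
    apply Subtype.ext
    simp only [covOp]
    group
  right_inv g := by
    apply Subtype.ext
    simp only [covOp]
    group

end PQuandle

namespace PQuandle

variable {X : Type*} [PQuandle X]

lemma ract_one (x : X) : ract x 1 = x := by simp [ract]

lemma mk_of_eq_gen (z : X) :
    (QuotientGroup.mk (FreeGroup.of z : FreeGroup X) : Adj X) = gen z := rfl

lemma ract_gen_inv (x z : X) : ract x (gen z)⁻¹ = (act z)⁻¹ x := by
  simp [ract, map_inv]

lemma ract_op (g : Adj X) : ∀ x y : X, ract (x ◁ y) g = ract x g ◁ ract y g := by
  obtain ⟨w, rfl⟩ := QuotientGroup.mk_surjective g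
  induction w using FreeGroup.induction_on with
  | C1 => intro x y; exact (by simp only [ract_one] : ract (x ◁ y) (1 : Adj X) = ract x 1 ◁ ract y 1)
  | of z =>
      intro x y
      rw [mk_of_eq_gen]
      simp only [ract_gen]
      exact op_distrib x y z
  | inv_of z _ =>
      intro x y
      rw [show (QuotientGroup.mk (FreeGroup.of z : FreeGroup X)⁻¹ : Adj X) = (gen z)⁻¹ by
        rw [QuotientGroup.mk_inv, mk_of_eq_gen]; rfl]
      simp only [ract_gen_inv]
      apply (act z).injective
      rw [Equiv.Perm.coe_inv, Equiv.apply_symm_apply]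
      have : ∀ u v : X, act z (u ◁ v) = act z u ◁ act z v := fun u v => op_distrib u v z
      rw [this, Equiv.apply_symm_apply, Equiv.apply_symm_apply]
  | mul u v hu hv =>
      have key : ∀ U V : Adj X, (∀ x y : X, ract (x ◁ y) U = ract x U ◁ ract y U) →
          (∀ x y : X, ract (x ◁ y) V = ract x V ◁ ract y V) →
          ∀ x y : X, ract (x ◁ y) (U * V) = ract x (U * V) ◁ ract y (U * V) := by
        intro U V hu hv x y
        rw [ract_mul, ract_mul, ract_mul, hu, hv]
      exact key _ _ hu hv

lemma gen_ract (g : Adj X) : ∀ x : X, gen (ract x g) = g⁻¹ * gen x * g := by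
  obtain ⟨w, rfl⟩ := QuotientGroup.mk_surjective g
  induction w using FreeGroup.induction_on with
  | C1 => intro x; exact (by simp only [ract_one, inv_one, one_mul, mul_one] : gen (ract x (1 : Adj X)) = (1 : Adj X)⁻¹ * gen x * 1)
  | of z =>
      intro x
      rw [mk_of_eq_gen, ract_gen]
      exact gen_rel x z
  | inv_of z _ =>
      intro x
      rw [show (QuotientGroup.mk (FreeGroup.of z : FreeGroup X)⁻¹ : Adj X) = (gen z)⁻¹ by
        rw [QuotientGroup.mk_inv, mk_of_eq_gen]; rfl]
      have hx : ract (ract x (gen z)⁻¹) (gen z) = x := by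
        rw [← ract_mul, inv_mul_cancel, ract_one]
      have := gen_rel (ract x (gen z)⁻¹) z
      rw [← ract_gen, hx] at this
      rw [this]; group
  | mul u v hu hv =>
      have key : ∀ U V : Adj X, (∀ x : X, gen (ract x U) = U⁻¹ * gen x * U) →
          (∀ x : X, gen (ract x V) = V⁻¹ * gen x * V) →
          ∀ x : X, gen (ract x (U * V)) = (U * V)⁻¹ * gen x * (U * V) := by
        intro U V hu hv x
        rw [ract_mul, hv, hu]; group
      exact key _ _ hu hv

lemma ract_gen_self_zpow (a : X) (n : ℤ) : ract a ((gen a) ^ n) = a := by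
  have h : Function.IsFixedPt (act a) a := op_self a
  have h2 : (innHom ((gen a) ^ n : Adj X))⁻¹ = (act a) ^ n := by
    rw [map_zpow, innHom_gen]; group
  rw [ract, h2]
  exact h.perm_zpow n

lemma ract_invariant_of_stab (g h : Adj X) (x : X) (hx : ract x g = x) :
    ract x (g⁻¹ * h) = ract x h := by
  rw [ract_mul]
  have : ract (ract x g⁻¹) g = x := by rw [← ract_mul, inv_mul_cancel, ract_one]
  have hinj : Function.Injective (fun y => ract y g) := fun u v huv => by
    simpa [ract] using (innHom g)⁻¹.injective huv
  have : ract x g⁻¹ = x := hinj (by simpa [hx] using this)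
  rw [this]

end PQuandle

open PQuandle in
/-- The map `p : X̂ → X`, `p(g) = a · g`, is a surjective quandle homomorphism and
a quandle covering. -/
theorem stmt15 (X : Type*) [PQuandle X] (hconn : Connected X) (a : X) :
    Function.Surjective (fun g : (eps (X := X)).ker => ract a g.1) ∧
    (∀ g h : (eps (X := X)).ker, ract a (covOp a g h).1 = (ract a g.1) ◁ (ract a h.1)) ∧
    (∀ g h k : (eps (X := X)).ker, ract a g.1 = ract a h.1 → covOp a k g = covOp a k h) := by
  refine ⟨?_, ?_, ?_⟩
  · intro y
    obtain ⟨g, hg⟩ := hconn a y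
    set n : ℤ := Multiplicative.toAdd (eps g) with hn
    refine ⟨⟨(gen a) ^ (-n) * g, ?_⟩, ?_⟩
    · have : eps ((gen a) ^ (-n) * g) = 1 := by
        rw [map_mul, map_zpow, eps_gen]
        have : eps g = Multiplicative.ofAdd n := by simp [hn]
        rw [this]
        apply Multiplicative.toAdd.injective
        simp
      exact this
    · simp only
      rw [ract_mul, ract_gen_self_zpow, hg]
  · intro g h
    show ract a ((gen a)⁻¹ * g.1 * (h.1)⁻¹ * gen a * h.1) = _
    have h1 : ract a (gen a)⁻¹ = a := by
      rw [ract_gen_inv]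
      apply (act a).injective
      rw [Equiv.Perm.coe_inv, Equiv.apply_symm_apply]
      exact (op_self a).symm
    have h2 : ract (ract (ract a g.1) (h.1)⁻¹) h.1 = ract a g.1 := by
      rw [← ract_mul, inv_mul_cancel, ract_one]
    rw [ract_mul, ract_mul, ract_mul, ract_mul, h1, ract_gen, ract_op, h2]
  · intro g h k hp
    apply Subtype.ext
    show (gen a)⁻¹ * k.1 * (g.1)⁻¹ * gen a * g.1 = (gen a)⁻¹ * k.1 * (h.1)⁻¹ * gen a * h.1
    have hg := gen_ract g.1 a
    have hh := gen_ract h.1 a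
    have key : (g.1)⁻¹ * gen a * g.1 = (h.1)⁻¹ * gen a * h.1 := by
      rw [← hg, ← hh, hp]
    calc (gen a)⁻¹ * k.1 * (g.1)⁻¹ * gen a * g.1
        = (gen a)⁻¹ * k.1 * ((g.1)⁻¹ * gen a * g.1) := by group
      _ = (gen a)⁻¹ * k.1 * ((h.1)⁻¹ * gen a * h.1) := by rw [key]
      _ = (gen a)⁻¹ * k.1 * (h.1)⁻¹ * gen a * h.1 := by group
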